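/- Let K ⊂ ℝ^{d+1} be a convex polytope with vertices v₁,...,v_n and nonempty interior. For each i let fᵢ be the normalized (d-dimensional Hausdorff) measure of the set {x ∈ S^d : (x) · (z - vᵢ) ≤ 0 for all z ∈ K}, the fraction of the sphere occupied by outer normals at vᵢ. Then Σᵢ fᵢ = 1. -/

import Mathlib

open scoped RealInnerProductSpace MeasureTheory ENNReal NNReal
open MeasureTheory Metric Set Module




/-- comparison constant -/
noncomputable def cC (m : ℕ) : ℝ≥0 := (m : ℝ≥0) ^ ((1:ℝ)/2)

lemma haus_le_vol {m : ℕ} {s : Set (EuclideanSpace ℝ (Fin m))} (hs : MeasurableSet s) :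
    μH[(m : ℝ)] s ≤ (cC m : ℝ≥0∞) ^ (m : ℝ) * volume s := by
  set e := WithLp.equiv 2 (Fin m → ℝ)
  have hanti : AntilipschitzWith (cC m) ⇑e := by
    have h := PiLp.antilipschitzWith_ofLp 2 (fun _ : Fin m => ℝ)
    simp [cC] at h ⊢
    exact h
  have hsymm : LipschitzWith (cC m) ⇑e.symm :=
    hanti.to_rightInverse e.right_inv
  have h1 : μH[(m : ℝ)] s = μH[(m : ℝ)] (e.symm '' (e '' s)) := by
    rw [Equiv.symm_image_image]
  have h2 : μH[(m : ℝ)] (e.symm '' (e '' s)) ≤ (cC m : ℝ≥0∞) ^ (m : ℝ) * μH[(m : ℝ)] (e '' s) :=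
    hsymm.hausdorffMeasure_image_le (by positivity) _
  have h3 : (μH[(m : ℝ)] : Measure (Fin m → ℝ)) (e '' s) = volume (e '' s) := by
    have := hausdorffMeasure_pi_real (ι := Fin m)
    rw [Fintype.card_fin] at this
    rw [this]
  have h4 : volume (e '' s) = volume s := by
    rw [Equiv.image_eq_preimage_symm]
    exact (PiLp.volume_preserving_toLp (Fin m)).measure_preimage hs.nullMeasurableSet
  calc μH[(m : ℝ)] s = μH[(m : ℝ)] (e.symm '' (e '' s)) := h1
    _ ≤ (cC m : ℝ≥0∞) ^ (m : ℝ) * μH[(m : ℝ)] (e '' s) := h2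
    _ = (cC m : ℝ≥0∞) ^ (m : ℝ) * volume s := by rw [h3, h4]

lemma vol_le_haus {m : ℕ} {s : Set (EuclideanSpace ℝ (Fin m))} (hs : MeasurableSet s) :
    volume s ≤ μH[(m : ℝ)] s := by
  set e := WithLp.equiv 2 (Fin m → ℝ)
  have h4 : volume s = volume (e '' s) := by
    rw [Equiv.image_eq_preimage_symm]
    exact ((PiLp.volume_preserving_toLp (Fin m)).measure_preimage
      hs.nullMeasurableSet).symm
  have h3 : volume (e '' s) = (μH[(m : ℝ)] : Measure (Fin m → ℝ)) (e '' s) := by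
    have := hausdorffMeasure_pi_real (ι := Fin m)
    rw [Fintype.card_fin] at this
    rw [this]
  have h2 : (μH[(m : ℝ)] : Measure (Fin m → ℝ)) (e '' s) ≤ μH[(m : ℝ)] s := by
    have := (PiLp.lipschitzWith_ofLp 2 (fun _ : Fin m => ℝ)).hausdorffMeasure_image_le
      (d := (m : ℝ)) (by positivity) s
    simpa [e] using this
  calc volume s = (μH[(m : ℝ)] : Measure (Fin m → ℝ)) (e '' s) := by rw [h4, h3]
    _ ≤ μH[(m : ℝ)] s := h2



lemma exists_isometry_range_orthogonal {d : ℕ} (u : EuclideanSpace ℝ (Fin (d+1))) (hu : u ≠ 0) :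
    ∃ f : EuclideanSpace ℝ (Fin d) →ₗᵢ[ℝ] EuclideanSpace ℝ (Fin (d+1)),
      Set.range f = {x | ⟪u, x⟫ = 0} := by
  set W := (ℝ ∙ u)ᗮ with hWdef
  have hW : finrank ℝ W = d := by
    have h1 := Submodule.finrank_add_finrank_orthogonal (K := ℝ ∙ u)
    rw [finrank_span_singleton hu, finrank_euclideanSpace_fin] at h1
    rw [← hWdef] at h1
    omega
  let b := (stdOrthonormalBasis ℝ W).reindex (finCongr (by rw [hW]))
  refine ⟨W.subtypeₗᵢ.comp b.repr.symm.toLinearIsometry, ?_⟩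
  ext x
  simp only [Set.mem_range, Set.mem_setOf_eq, LinearIsometry.coe_comp, Function.comp_apply]
  constructor
  · rintro ⟨y, rfl⟩
    have := (b.repr.symm y).2
    rw [Submodule.mem_orthogonal_singleton_iff_inner_right] at this
    exact this
  · intro hx
    have hxW : x ∈ W := Submodule.mem_orthogonal_singleton_iff_inner_right.mpr hx
    exact ⟨b.repr ⟨x, hxW⟩, by simp⟩





lemma haus_hyperplane_sphere_null {d : ℕ} (u : EuclideanSpace ℝ (Fin (d+1))) (hu : u ≠ 0) :
    μH[(d : ℝ)] {x : EuclideanSpace ℝ (Fin (d+1)) | ‖x‖ = 1 ∧ ⟪u, x⟫ = 0} = 0 := by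
  obtain ⟨f, hf⟩ := exists_isometry_range_orthogonal u hu
  have himg : {x : EuclideanSpace ℝ (Fin (d+1)) | ‖x‖ = 1 ∧ ⟪u, x⟫ = 0}
      = ⇑f '' (sphere 0 1) := by
    ext x
    simp only [Set.mem_setOf_eq, Set.mem_image, mem_sphere_iff_norm, sub_zero]
    constructor
    · rintro ⟨hx1, hx2⟩
      have : x ∈ Set.range ⇑f := by rw [hf]; exact hx2
      obtain ⟨y, rfl⟩ := this
      exact ⟨y, by rwa [← f.norm_map y], rfl⟩
    · rintro ⟨y, hy, rfl⟩
      refine ⟨by rw [f.norm_map, hy], ?_⟩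
      have : f y ∈ Set.range ⇑f := Set.mem_range_self y
      rw [hf] at this; exact this
  rw [himg, f.isometry.hausdorffMeasure_image (Or.inl (by positivity))]
  have h0 : volume (sphere (0 : EuclideanSpace ℝ (Fin d)) 1) = 0 := by
    rcases isEmpty_or_nonempty (Fin d) with h | h
    · have : (sphere (0 : EuclideanSpace ℝ (Fin d)) 1) = ∅ := by
        ext x
        simp [mem_sphere_iff_norm, Subsingleton.elim x 0]
      simp [this]
    · exact Measure.addHaar_sphere volume 0 1
  have := haus_le_vol (m := d) (s := sphere 0 1) (isClosed_sphere.measurableSet)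
  rw [h0, mul_zero] at this
  exact le_antisymm this zero_le

lemma haus_hyperplane_ball_lt_top {d : ℕ} (u : EuclideanSpace ℝ (Fin (d+1))) (hu : u ≠ 0) :
    μH[(d : ℝ)] {x : EuclideanSpace ℝ (Fin (d+1)) | ⟪u, x⟫ = 0 ∧ ‖x‖ ≤ 1} < ⊤ := by
  obtain ⟨f, hf⟩ := exists_isometry_range_orthogonal u hu
  have hsub : {x : EuclideanSpace ℝ (Fin (d+1)) | ⟪u, x⟫ = 0 ∧ ‖x‖ ≤ 1}
      ⊆ ⇑f '' (closedBall 0 1) := by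
    rintro x ⟨hx2, hx1⟩
    have : x ∈ Set.range ⇑f := by rw [hf]; exact hx2
    obtain ⟨y, rfl⟩ := this
    exact ⟨y, by simpa [mem_closedBall_iff_norm, f.norm_map] using hx1, rfl⟩
  refine lt_of_le_of_lt (measure_mono hsub) ?_
  rw [f.isometry.hausdorffMeasure_image (Or.inl (by positivity))]
  refine lt_of_le_of_lt (haus_le_vol measurableSet_closedBall) ?_
  exact ENNReal.mul_lt_top (ENNReal.rpow_lt_top_of_nonneg (by positivity) ENNReal.coe_ne_top) measure_closedBall_lt_top


lemma sphere_haus_pos (d : ℕ) :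
    0 < μH[(d : ℝ)] {x : EuclideanSpace ℝ (Fin (d+1)) | ‖x‖ = 1} := by
  classical
  set P : EuclideanSpace ℝ (Fin (d+1)) → EuclideanSpace ℝ (Fin d) :=
    fun x => (WithLp.equiv 2 (Fin d → ℝ)).symm (fun k => x k.castSucc) with hP
  have hlip : LipschitzWith 1 P := by
    rw [lipschitzWith_iff_dist_le_mul]
    intro x y
    rw [NNReal.coe_one, one_mul, EuclideanSpace.dist_eq, EuclideanSpace.dist_eq]
    apply Real.sqrt_le_sqrt
    have : ∀ k : Fin d, P x k = x k.castSucc := fun k => rfl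
    simp only [hP, WithLp.equiv_symm_apply, PiLp.toLp_apply]
    rw [Fin.sum_univ_castSucc (f := fun i : Fin (d+1) => dist (x i) (y i) ^ 2)]
    have h0 : (0:ℝ) ≤ dist (x (Fin.last d)) (y (Fin.last d)) ^ 2 := sq_nonneg _
    linarith
  have hsub : closedBall (0 : EuclideanSpace ℝ (Fin d)) 1
      ⊆ P '' {x : EuclideanSpace ℝ (Fin (d+1)) | ‖x‖ = 1} := by
    intro y hy
    rw [mem_closedBall_iff_norm, sub_zero] at hy
    set c : ℝ := Real.sqrt (1 - ‖y‖ ^ 2) with hc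
    set x : EuclideanSpace ℝ (Fin (d+1)) :=
      (WithLp.equiv 2 (Fin (d+1) → ℝ)).symm ((Fin.snoc (fun k => y k) c : Fin (d+1) → ℝ)) with hx
    have hxapp : ∀ j, x j = (Fin.snoc (fun k => y k) c : Fin (d+1) → ℝ) j := fun j => rfl
    have hxnorm : ‖x‖ = 1 := by
      rw [EuclideanSpace.norm_eq]
      simp only [Real.norm_eq_abs, sq_abs]
      have : ∑ j, x j ^ 2 = (∑ k : Fin d, y k ^ 2) + c ^ 2 := by
        rw [Fin.sum_univ_castSucc (f := fun j : Fin (d+1) => x j ^ 2)]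
        congr 1
        · apply Finset.sum_congr rfl
          intro k _
          rw [hxapp, Fin.snoc_castSucc]
        · rw [hxapp, Fin.snoc_last]
      rw [this]
      have hy2 : ∑ k : Fin d, y k ^ 2 = ‖y‖ ^ 2 := by
        rw [EuclideanSpace.norm_eq, Real.sq_sqrt (by positivity)]
        simp [Real.norm_eq_abs, sq_abs]
      have hc2 : c ^ 2 = 1 - ‖y‖ ^ 2 := by
        rw [hc, Real.sq_sqrt (by nlinarith [norm_nonneg y])]
      rw [hy2, hc2]
      simp
    refine ⟨x, hxnorm, ?_⟩
    have hk : (fun k : Fin d => x k.castSucc) = (WithLp.equiv 2 (Fin d → ℝ)) y := by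
      funext k
      rw [hxapp, Fin.snoc_castSucc]
      rfl
    show (WithLp.equiv 2 (Fin d → ℝ)).symm (fun k => x k.castSucc) = y
    rw [hk, Equiv.symm_apply_apply]
  have h1 : (0:ℝ≥0∞) < volume (closedBall (0 : EuclideanSpace ℝ (Fin d)) 1) :=
    lt_of_lt_of_le (measure_ball_pos volume 0 one_pos) (measure_mono ball_subset_closedBall)
  have h2 : volume (closedBall (0 : EuclideanSpace ℝ (Fin d)) 1)
      ≤ μH[(d : ℝ)] (closedBall (0 : EuclideanSpace ℝ (Fin d)) 1) :=
    vol_le_haus measurableSet_closedBall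
  have h3 : μH[(d : ℝ)] (closedBall (0 : EuclideanSpace ℝ (Fin d)) 1)
      ≤ μH[(d : ℝ)] (P '' {x : EuclideanSpace ℝ (Fin (d+1)) | ‖x‖ = 1}) :=
    measure_mono hsub
  have h4 := hlip.hausdorffMeasure_image_le (d := (d:ℝ)) (by positivity)
    {x : EuclideanSpace ℝ (Fin (d+1)) | ‖x‖ = 1}
  calc (0:ℝ≥0∞) < volume (closedBall (0 : EuclideanSpace ℝ (Fin d)) 1) := h1
    _ ≤ μH[(d : ℝ)] (P '' {x : EuclideanSpace ℝ (Fin (d+1)) | ‖x‖ = 1}) := le_trans h2 h3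
    _ ≤ 1 ^ (d:ℝ) * μH[(d : ℝ)] {x : EuclideanSpace ℝ (Fin (d+1)) | ‖x‖ = 1} := by
        simpa using h4
    _ = μH[(d : ℝ)] {x : EuclideanSpace ℝ (Fin (d+1)) | ‖x‖ = 1} := by simp


section caps

variable (d : ℕ)

/-- cap domain -/
def capD (i : Fin (d+1)) : Set (EuclideanSpace ℝ (Fin (d+1))) :=
  {y | y i = 0 ∧ ‖y‖ ^ 2 ≤ 1 - 1/(d+1)}

/-- cap parametrization -/
noncomputable def capT (i : Fin (d+1)) (σ : ℝ) (y : EuclideanSpace ℝ (Fin (d+1))) :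
    EuclideanSpace ℝ (Fin (d+1)) :=
  y + (σ * Real.sqrt (1 - ‖y‖ ^ 2)) • EuclideanSpace.single i 1

lemma capT_lipschitz (i : Fin (d+1)) (σ : ℝ) (hσ : |σ| = 1) :
    LipschitzOnWith (1 + 2 * Real.sqrt (d+1)).toNNReal (capT d i σ) (capD d i) := by
  rw [lipschitzOnWith_iff_dist_le_mul]
  rintro y ⟨-, hy⟩ z ⟨-, hz⟩
  have hinv0 : (0:ℝ) < 1/((d:ℝ)+1) := by positivity
  have hny : ‖y‖ ≤ 1 := by nlinarith [norm_nonneg y, hinv0]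
  have hnz : ‖z‖ ≤ 1 := by nlinarith [norm_nonneg z, hinv0]
  set a := 1 - ‖y‖ ^ 2 with ha
  set b := 1 - ‖z‖ ^ 2 with hb
  have hinv : (0:ℝ) < 1/(d+1) := by positivity
  have ha1 : 1/((d:ℝ)+1) ≤ a := by simp only [ha]; push_cast at hy ⊢; linarith
  have hb1 : 1/((d:ℝ)+1) ≤ b := by simp only [hb]; push_cast at hz ⊢; linarith
  have hsa : Real.sqrt (1/((d:ℝ)+1)) ≤ Real.sqrt a := Real.sqrt_le_sqrt ha1
  have hsb : Real.sqrt (1/((d:ℝ)+1)) ≤ Real.sqrt b := Real.sqrt_le_sqrt hb1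
  have hsapos : 0 < Real.sqrt (1/((d:ℝ)+1)) := Real.sqrt_pos.mpr hinv
  have hprod : (Real.sqrt a - Real.sqrt b) * (Real.sqrt a + Real.sqrt b) = a - b := by
    have h1 : Real.sqrt a ^ 2 = a := Real.sq_sqrt (by linarith)
    have h2 : Real.sqrt b ^ 2 = b := Real.sq_sqrt (by linarith)
    nlinarith [h1, h2]
  have hab : |a - b| ≤ 2 * ‖y - z‖ := by
    have h5 : |‖y‖ - ‖z‖| ≤ ‖y - z‖ := abs_norm_sub_norm_le y z
    have : a - b = (‖z‖ - ‖y‖) * (‖z‖ + ‖y‖) := by ring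
    rw [this, abs_mul]
    have h6 : |‖z‖ + ‖y‖| ≤ 2 := by
      rw [abs_of_nonneg (by positivity)]; linarith
    have h7 : |‖z‖ - ‖y‖| ≤ ‖y - z‖ := by
      rw [abs_sub_comm]; exact h5
    nlinarith [abs_nonneg (‖z‖ - ‖y‖)]
  have hsrt : |Real.sqrt a - Real.sqrt b| ≤ Real.sqrt ((d:ℝ)+1) * |a - b| := by
    have hsum : 2 * Real.sqrt (1/((d:ℝ)+1)) ≤ Real.sqrt a + Real.sqrt b := by linarith
    have key : |Real.sqrt a - Real.sqrt b| * (Real.sqrt a + Real.sqrt b) = |a - b| := by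
      rw [← abs_of_nonneg (by positivity : (0:ℝ) ≤ Real.sqrt a + Real.sqrt b), ← abs_mul, hprod]
    have hrecip : Real.sqrt (1/((d:ℝ)+1)) * Real.sqrt ((d:ℝ)+1) = 1 := by
      rw [← Real.sqrt_mul (by positivity)]
      rw [one_div, inv_mul_cancel₀ (by positivity)]
      exact Real.sqrt_one
    have h8 : |Real.sqrt a - Real.sqrt b| * (2 * Real.sqrt (1/((d:ℝ)+1)))
        ≤ |a - b| := by
      calc |Real.sqrt a - Real.sqrt b| * (2 * Real.sqrt (1/((d:ℝ)+1)))
          ≤ |Real.sqrt a - Real.sqrt b| * (Real.sqrt a + Real.sqrt b) :=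
            mul_le_mul_of_nonneg_left hsum (abs_nonneg _)
        _ = |a - b| := key
    have h9 : 0 < Real.sqrt ((d:ℝ)+1) := Real.sqrt_pos.mpr (by positivity)
    nlinarith [abs_nonneg (Real.sqrt a - Real.sqrt b), abs_nonneg (a-b)]
  -- now the distance bound
  have hTd : capT d i σ y - capT d i σ z
      = (y - z) + (σ * (Real.sqrt a - Real.sqrt b)) • EuclideanSpace.single i (1:ℝ) := by
    simp only [capT, ← ha, ← hb]
    module
  have hs1 : ‖EuclideanSpace.single i (1:ℝ)‖ = 1 := by
    rw [EuclideanSpace.norm_single]; simp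
  rw [Real.coe_toNNReal _ (by positivity)]
  rw [dist_eq_norm, dist_eq_norm, hTd]
  calc ‖(y - z) + (σ * (Real.sqrt a - Real.sqrt b)) • EuclideanSpace.single i (1:ℝ)‖
      ≤ ‖y - z‖ + ‖(σ * (Real.sqrt a - Real.sqrt b)) • EuclideanSpace.single i (1:ℝ)‖ :=
        norm_add_le _ _
    _ = ‖y - z‖ + |σ * (Real.sqrt a - Real.sqrt b)| := by
        rw [norm_smul, hs1, mul_one, Real.norm_eq_abs]
    _ = ‖y - z‖ + |Real.sqrt a - Real.sqrt b| := by rw [abs_mul, hσ, one_mul]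
    _ ≤ ‖y - z‖ + Real.sqrt ((d:ℝ)+1) * (2 * ‖y - z‖) := by
        have := le_trans hsrt (mul_le_mul_of_nonneg_left hab (Real.sqrt_nonneg _))
        linarith
    _ ≤ (1 + 2 * Real.sqrt ((d:ℝ)+1)) * ‖y - z‖ := by ring_nf; rfl
    _ = (1 + 2 * Real.sqrt ((d:ℝ)+1)) * ‖y - z‖ := rfl
  
lemma sphere_cover :
    {x : EuclideanSpace ℝ (Fin (d+1)) | ‖x‖ = 1} ⊆
      ⋃ i : Fin (d+1), (capT d i 1 '' capD d i ∪ capT d i (-1) '' capD d i) := by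
  intro x hx
  simp only [Set.mem_setOf_eq] at hx
  have hsum : ∑ j, x j ^ 2 = 1 := by
    have h := congrArg (· ^ 2) (EuclideanSpace.norm_eq x ▸ hx)
    simp only [one_pow] at h
    rw [Real.sq_sqrt (by positivity)] at h
    simpa [Real.norm_eq_abs, sq_abs] using h
  have hex : ∃ i, 1/((d:ℝ)+1) ≤ x i ^ 2 := by
    by_contra h
    push_neg at h
    have : ∑ j, x j ^ 2 < ∑ _j : Fin (d+1), 1/((d:ℝ)+1) :=
      Finset.sum_lt_sum_of_nonempty Finset.univ_nonempty (fun j _ => h j)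
    rw [Finset.sum_const, Finset.card_univ, Fintype.card_fin, hsum] at this
    rw [nsmul_eq_mul] at this
    have : (1:ℝ) < 1 := by
      calc (1:ℝ) < (d+1 : ℕ) * (1/((d:ℝ)+1)) := this
        _ = 1 := by push_cast; field_simp
    linarith
  obtain ⟨i, hi⟩ := hex
  set y : EuclideanSpace ℝ (Fin (d+1)) := x - x i • EuclideanSpace.single i 1 with hydef
  have hyi : y i = 0 := by
    simp [hydef, EuclideanSpace.single_apply]
  have hynorm : ‖y‖ ^ 2 = 1 - x i ^ 2 := by
    rw [hydef, norm_sub_sq_real]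
    rw [real_inner_smul_right, EuclideanSpace.inner_single_right]
    rw [norm_smul, EuclideanSpace.norm_single]
    simp only [RCLike.inner_apply, conj_trivial, norm_one, mul_one, Real.norm_eq_abs]
    rw [hx, sq_abs]; ring
  have hyD : y ∈ capD d i := by
    refine ⟨hyi, ?_⟩
    rw [hynorm]
    push_cast
    linarith
  have hsq : Real.sqrt (1 - ‖y‖ ^ 2) = |x i| := by
    rw [hynorm]
    have : 1 - (1 - x i ^ 2) = x i ^ 2 := by ring
    rw [this, Real.sqrt_sq_eq_abs]
  rcases le_or_gt 0 (x i) with hpos | hneg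
  · refine Set.mem_iUnion.mpr ⟨i, Or.inl ⟨y, hyD, ?_⟩⟩
    rw [capT, hsq, abs_of_nonneg hpos, one_mul, hydef]
    abel
  · refine Set.mem_iUnion.mpr ⟨i, Or.inr ⟨y, hyD, ?_⟩⟩
    rw [capT, hsq, abs_of_neg hneg, hydef]
    have h9 : -(1 * - x i) = x i := by ring
    simp only [neg_mul]
    rw [h9]
    abel

end caps

lemma sphere_haus_lt_top' (d : ℕ) :
    μH[(d : ℝ)] {x : EuclideanSpace ℝ (Fin (d+1)) | ‖x‖ = 1} < ⊤ := by
  have hD : ∀ i : Fin (d+1), μH[(d : ℝ)] (capD d i) < ⊤ := by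
    intro i
    have hu : (EuclideanSpace.single i (1:ℝ)) ≠ 0 := by
      intro h
      have := congrFun (congrArg (fun v : EuclideanSpace ℝ (Fin (d+1)) => (v : Fin (d+1) → ℝ)) h) i
      simp [EuclideanSpace.single_apply] at this
    refine lt_of_le_of_lt (measure_mono ?_) (haus_hyperplane_ball_lt_top _ hu)
    rintro y ⟨hy1, hy2⟩
    have hinv0 : (0:ℝ) < 1/((d:ℝ)+1) := by positivity
    refine ⟨?_, by nlinarith [norm_nonneg y, hinv0]⟩
    rw [EuclideanSpace.inner_single_left]
    simp [hy1]
  have himg : ∀ (i : Fin (d+1)) (σ : ℝ), |σ| = 1 →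
      μH[(d : ℝ)] (capT d i σ '' capD d i) < ⊤ := by
    intro i σ hσ
    refine lt_of_le_of_lt ((capT_lipschitz d i σ hσ).hausdorffMeasure_image_le (by positivity)) ?_
    exact ENNReal.mul_lt_top (ENNReal.rpow_lt_top_of_nonneg (by positivity) ENNReal.coe_ne_top)
      (hD i)
  refine lt_of_le_of_lt (measure_mono (sphere_cover d)) ?_
  refine lt_of_le_of_lt (measure_iUnion_fintype_le _ _) ?_
  refine ENNReal.sum_lt_top.mpr fun i _ => ?_
  refine lt_of_le_of_lt (measure_union_le _ _) ?_
  exact ENNReal.add_lt_top.mpr ⟨himg i 1 (by norm_num), himg i (-1) (by norm_num)⟩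





/-- Gauss–Bonnet/Federer for convex polytopes: the fractions of the unit sphere `S^d`
occupied by the outer normal cones at the vertices of a convex polytope
`K ⊂ ℝ^{d+1}` with nonempty interior sum to `1`. -/
theorem sum_normal_fractions_eq_one
    (d : ℕ) (V : Finset (EuclideanSpace ℝ (Fin (d + 1))))
    (hint : (interior (convexHull ℝ (V : Set (EuclideanSpace ℝ (Fin (d + 1)))))).Nonempty)
    (hvert : ∀ v ∈ V, v ∉ convexHull ℝ ((V : Set (EuclideanSpace ℝ (Fin (d + 1)))) \ {v})) :
    ∑ v ∈ V,
      (μH[(d : ℝ)] {x : EuclideanSpace ℝ (Fin (d + 1)) |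
          ‖x‖ = 1 ∧ ∀ z ∈ convexHull ℝ (V : Set (EuclideanSpace ℝ (Fin (d + 1)))),
            ⟪x, z - v⟫ ≤ 0}).toReal /
        (μH[(d : ℝ)] (Metric.sphere (0 : EuclideanSpace ℝ (Fin (d + 1))) 1)).toReal
      = 1 := by
  classical
  set K : Set (EuclideanSpace ℝ (Fin (d + 1))) := convexHull ℝ (V : Set (EuclideanSpace ℝ (Fin (d + 1)))) with hK
  set μ : Measure (EuclideanSpace ℝ (Fin (d + 1))) := μH[(d : ℝ)] with hμ
  set A : EuclideanSpace ℝ (Fin (d + 1)) → Set (EuclideanSpace ℝ (Fin (d + 1))) := fun v => {x : EuclideanSpace ℝ (Fin (d + 1)) | ‖x‖ = 1 ∧ ∀ z ∈ K, ⟪x, z - v⟫ ≤ 0} with hA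
  set S : Set (EuclideanSpace ℝ (Fin (d + 1))) := {x : EuclideanSpace ℝ (Fin (d + 1)) | ‖x‖ = 1} with hS
  -- V nonempty
  have hVne : V.Nonempty := by
    rcases Finset.eq_empty_or_nonempty V with h | h
    · exfalso
      rw [hK, h] at hint
      simp at hint
    · exact h
  -- measurability
  have hAclosed : ∀ v, IsClosed (A v) := by
    intro v
    have : A v = {x : EuclideanSpace ℝ (Fin (d + 1)) | ‖x‖ = 1} ∩ ⋂ z ∈ K, {x : EuclideanSpace ℝ (Fin (d + 1)) | ⟪x, z - v⟫ ≤ 0} := by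
      ext x
      simp only [hA, Set.mem_setOf_eq, Set.mem_inter_iff, Set.mem_iInter]
    rw [this]
    refine IsClosed.inter ?_ ?_
    · have : {x : EuclideanSpace ℝ (Fin (d + 1)) | ‖x‖ = 1} = Metric.sphere (0 : EuclideanSpace ℝ (Fin (d + 1))) 1 := by
        ext x; simp [mem_sphere_iff_norm]
      rw [this]; exact isClosed_sphere
    · exact isClosed_biInter fun z _ =>
        isClosed_le (Continuous.inner continuous_id continuous_const) continuous_const
  -- covering
  have hcover : (⋃ v ∈ V, A v) = S := by
    apply Set.Subset.antisymm
    · refine Set.iUnion₂_subset fun v _ => fun x hx => hx.1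
    · intro x hx
      obtain ⟨v, hvV, hvmax⟩ := V.exists_max_image (fun w => ⟪x, w⟫) hVne
      refine Set.mem_biUnion hvV ⟨hx, ?_⟩
      intro z hz
      have hhalf : K ⊆ {w : EuclideanSpace ℝ (Fin (d + 1)) | ⟪x, w⟫ ≤ ⟪x, v⟫} := by
        rw [hK]
        apply convexHull_min
        · intro w hw
          exact hvmax w hw
        · exact convex_halfSpace_le
            ⟨fun a b => inner_add_right x a b, fun c a => real_inner_smul_right x a c⟩ _
      have := hhalf hz
      rw [Set.mem_setOf_eq] at this
      rw [inner_sub_right]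
      linarith
  -- a.e. disjoint
  have hdisj : ∀ v ∈ V, ∀ w ∈ V, v ≠ w → AEDisjoint μ (A v) (A w) := by
    intro v hv w hw hvw
    have hsub : A v ∩ A w ⊆ {x : EuclideanSpace ℝ (Fin (d + 1)) | ‖x‖ = 1 ∧ ⟪w - v, x⟫ = 0} := by
      rintro x ⟨⟨hx1, hxv⟩, ⟨-, hxw⟩⟩
      refine ⟨hx1, ?_⟩
      have h1 : ⟪x, w - v⟫ ≤ 0 := hxv w (subset_convexHull ℝ _ hw)
      have h2 : ⟪x, v - w⟫ ≤ 0 := hxw v (subset_convexHull ℝ _ hv)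
      have h3 : ⟪x, v - w⟫ = -⟪x, w - v⟫ := by
        rw [← inner_neg_right]; congr 1; abel
      rw [real_inner_comm]
      linarith [h3 ▸ h2]
    exact measure_mono_null hsub
      (haus_hyperplane_sphere_null (w - v) (sub_ne_zero.mpr (Ne.symm hvw)))
  -- sum of measures
  have hsum : ∑ v ∈ V, μ (A v) = μ S := by
    rw [← hcover]
    exact (measure_biUnion_finset₀ hdisj
      (fun v _ => (hAclosed v).measurableSet.nullMeasurableSet)).symm
  -- sphere set identification
  have hsphere : Metric.sphere (0 : EuclideanSpace ℝ (Fin (d + 1))) 1 = S := by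
    ext x; simp [hS, mem_sphere_iff_norm]
  have hpos : 0 < μ S := sphere_haus_pos d
  have hfin : μ S < ⊤ := sphere_haus_lt_top' d
  have htR : (μ S).toReal ≠ 0 := by
    rw [ENNReal.toReal_ne_zero]
    exact ⟨hpos.ne', hfin.ne⟩
  have hstep : ∀ v ∈ V, (μH[(d : ℝ)] {x : EuclideanSpace ℝ (Fin (d + 1)) |
      ‖x‖ = 1 ∧ ∀ z ∈ convexHull ℝ (V : Set (EuclideanSpace ℝ (Fin (d + 1)))), ⟪x, z - v⟫ ≤ 0}) = μ (A v) := by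
    intro v _; rfl
  show ∑ v ∈ V, (μ (A v)).toReal /
      (μ (Metric.sphere (0 : EuclideanSpace ℝ (Fin (d + 1))) 1)).toReal = 1
  calc ∑ v ∈ V, (μ (A v)).toReal / (μ (Metric.sphere (0 : EuclideanSpace ℝ (Fin (d + 1))) 1)).toReal
      = (∑ v ∈ V, (μ (A v)).toReal) / (μ S).toReal := by
        rw [Finset.sum_div, hsphere]
    _ = ((∑ v ∈ V, μ (A v)).toReal) / (μ S).toReal := by
        rw [ENNReal.toReal_sum]
        intro v hv
        refine ne_of_lt (lt_of_le_of_lt (measure_mono ?_) hfin)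
        exact fun x hx => hx.1
    _ = (μ S).toReal / (μ S).toReal := by rw [hsum]
    _ = 1 := div_self htR
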